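/- arXiv:1702.02286 — 8 statements merged into one kernel-verified Lean document; each statement's English description precedes it below -/
import Mathlib

section
/- Let σ > 0 and let β_i, β_j be real numbers with |β_i| > |β_j|. Let Z_i and Z_j be independent real random variables with Z_i distributed N(β_i, σ²) and Z_j distributed N(β_j, σ²). Then P(|Z_i| > |Z_j|) > 1/2. -/
open MeasureTheory ProbabilityTheory
open scoped ENNReal NNReal


-- core real inequality
lemma core_int {v : ℝ} (hv : 0 < v) {t m1 m2 : ℝ} (ht : 0 < t) (hm2 : 0 ≤ m2) (hm : m2 < m1) :
    (∫ x in (-t)..t, Real.exp (-(x - m1)^2 / (2*v))) <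
      ∫ x in (-t)..t, Real.exp (-(x - m2)^2 / (2*v)) := by
  have hshift : ∀ m : ℝ, (∫ x in (-t)..t, Real.exp (-(x - m)^2 / (2*v)))
      = ∫ x in (-t - m)..(t - m), Real.exp (-x^2 / (2*v)) := fun m =>
    intervalIntegral.integral_comp_sub_right (fun x => Real.exp (-x^2/(2*v))) m
  rw [hshift, hshift]
  set φ : ℝ → ℝ := fun x => Real.exp (-x^2/(2*v)) with hφ
  have hcont : Continuous φ := by fun_prop
  have hInt : ∀ a b : ℝ, IntervalIntegrable φ volume a b := fun a b =>
    (hcont.continuousOn).intervalIntegrable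
  -- chasles
  have h1 : (∫ x in (-t - m1)..(t - m1), φ x) + (∫ x in (t - m1)..(t - m2), φ x)
      = ∫ x in (-t - m1)..(t - m2), φ x :=
    intervalIntegral.integral_add_adjacent_intervals (hInt _ _) (hInt _ _)
  have h2 : (∫ x in (-t - m1)..(-t - m2), φ x) + (∫ x in (-t - m2)..(t - m2), φ x)
      = ∫ x in (-t - m1)..(t - m2), φ x :=
    intervalIntegral.integral_add_adjacent_intervals (hInt _ _) (hInt _ _)
  have hshift2 : (∫ x in (-t - m1)..(-t - m2), φ x)
      = ∫ x in (t - m1)..(t - m2), φ (x - 2*t) := by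
    rw [intervalIntegral.integral_comp_sub_right (fun x => φ x) (2*t)]
    norm_num
    ring_nf
  have hkey : (∫ x in (t - m1)..(t - m2), φ (x - 2*t)) < ∫ x in (t - m1)..(t - m2), φ x := by
    apply intervalIntegral.integral_lt_integral_of_continuousOn_of_le_of_exists_lt
      (by linarith) ((hcont.comp (by continuity)).continuousOn) hcont.continuousOn
    · intro x hx
      have hxt : x ≤ t := by
        rcases hx with ⟨_, h⟩; linarith
      have : x^2 ≤ (x - 2*t)^2 := by nlinarith
      have h2v : (0:ℝ) < 2*v := by linarith
      exact Real.exp_le_exp.2 ((div_le_div_iff_of_pos_right h2v).2 (by beta_reduce; nlinarith))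
    · refine ⟨t - m1, ⟨le_refl _, by linarith⟩, ?_⟩
      have hxt : t - m1 < t := by linarith
      have : (t - m1)^2 < (t - m1 - 2*t)^2 := by nlinarith
      have h2v : (0:ℝ) < 2*v := by linarith
      exact Real.exp_lt_exp.2 ((div_lt_div_iff_of_pos_right h2v).2 (by beta_reduce; nlinarith))
  linarith [h1, h2, hshift2, hkey]

lemma refl_int (v m t : ℝ) :
    (∫ x in (-t)..t, Real.exp (-(x - (-m))^2 / (2*v))) =
      ∫ x in (-t)..t, Real.exp (-(x - m)^2 / (2*v)) := by
  have h := intervalIntegral.integral_comp_neg (a := -t) (b := t)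
    (fun y => Real.exp (-(y - m)^2/(2*v)))
  rw [neg_neg] at h
  rw [← h]
  apply intervalIntegral.integral_congr
  intro x _
  simp only
  congr 1
  ring

lemma int_abs (v t b : ℝ) :
    (∫ x in (-t)..t, Real.exp (-(x - b)^2/(2*v))) =
      ∫ x in (-t)..t, Real.exp (-(x - |b|)^2/(2*v)) := by
  rcases abs_choice b with h | h
  · rw [h]
  · rw [h]; exact (refl_int v b t).symm

lemma gauss_Icc_lt {v : ℝ≥0} (hv : v ≠ 0) {t : ℝ} (ht : 0 < t) {b1 b2 : ℝ} (h : |b2| < |b1|) :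
    gaussianReal b1 v (Set.Icc (-t) t) < gaussianReal b2 v (Set.Icc (-t) t) := by
  rw [gaussianReal_apply_eq_integral _ hv, gaussianReal_apply_eq_integral _ hv]
  have hv' : (0:ℝ) < (v:ℝ) := by positivity
  have hconv : ∀ b : ℝ, (∫ x in Set.Icc (-t) t, gaussianPDFReal b v x)
      = (Real.sqrt (2 * Real.pi * v))⁻¹ * ∫ x in (-t)..t, Real.exp (-(x - b)^2/(2*(v:ℝ))) := by
    intro b
    rw [MeasureTheory.integral_Icc_eq_integral_Ioc,
      ← intervalIntegral.integral_of_le (by linarith : -t ≤ t),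
      ← intervalIntegral.integral_const_mul]
    rfl
  have hc : (0:ℝ) < (Real.sqrt (2 * Real.pi * v))⁻¹ := by positivity
  have hlt : (∫ x in Set.Icc (-t) t, gaussianPDFReal b1 v x)
      < ∫ x in Set.Icc (-t) t, gaussianPDFReal b2 v x := by
    rw [hconv, hconv]
    apply mul_lt_mul_of_pos_left _ hc
    rw [int_abs _ _ b1, int_abs _ _ b2]
    exact core_int hv' ht (abs_nonneg _) h
  exact ENNReal.ofReal_lt_ofReal_iff_of_nonneg (MeasureTheory.integral_nonneg
    (fun x => gaussianPDFReal_nonneg _ _ x)) |>.2 hlt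

lemma gauss_tail_eq {v : ℝ≥0} (hv : v ≠ 0) (b t : ℝ) :
    gaussianReal b v {x | t < |x|} = 1 - gaussianReal b v (Set.Icc (-t) t) := by
  have hset : {x : ℝ | t < |x|} = (Set.Icc (-t) t)ᶜ := by
    ext x
    rw [Set.mem_compl_iff, Set.mem_Icc, ← abs_le, not_le]
    rfl
  rw [hset, measure_compl measurableSet_Icc (measure_ne_top _ _), measure_univ]

lemma gauss_tail_lt {v : ℝ≥0} (hv : v ≠ 0) {t : ℝ} (ht : 0 < t) {b1 b2 : ℝ} (h : |b2| < |b1|) :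
    gaussianReal b2 v {x | t < |x|} < gaussianReal b1 v {x | t < |x|} := by
  rw [gauss_tail_eq hv, gauss_tail_eq hv]
  have h1 := gauss_Icc_lt hv ht h
  have c1 : AddLECancellable (1 : ℝ≥0∞) := ENNReal.cancel_of_ne (by simp)
  have c2 : AddLECancellable (gaussianReal b2 v (Set.Icc (-t) t)) :=
    ENNReal.cancel_of_ne (measure_ne_top _ _)
  exact (c1.tsub_lt_tsub_iff_left_of_le c2 prob_le_one).2 h1

lemma gauss_singleton {v : ℝ≥0} (hv : v ≠ 0) (b a : ℝ) : gaussianReal b v {a} = 0 :=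
  gaussianReal_absolutelyContinuous b hv (measure_singleton a)


/-- Lemma 1 (first part): if `|βj| < |βi|`, `Zi ~ N(βi, σ²)`, `Zj ~ N(βj, σ²)` are
independent, then `P(|Zi| > |Zj|) > 1/2`. -/
theorem stmt_0 {Ω : Type*} [MeasurableSpace Ω] (P : Measure Ω) [IsProbabilityMeasure P]
    (σ : ℝ≥0) (hσ : 0 < σ) (βi βj : ℝ) (hβ : |βj| < |βi|)
    (Zi Zj : Ω → ℝ) (hZi : Measurable Zi) (hZj : Measurable Zj)
    (hindep : IndepFun Zi Zj P)
    (hdi : P.map Zi = gaussianReal βi (σ ^ 2))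
    (hdj : P.map Zj = gaussianReal βj (σ ^ 2)) :
    (1 : ℝ≥0∞) / 2 < P {ω | |Zj ω| < |Zi ω|} := by
  set v : ℝ≥0 := σ ^ 2 with hvdef
  have hv : v ≠ 0 := pow_ne_zero _ hσ.ne'
  set μ : Measure ℝ := gaussianReal βi v with hμdef
  set ν : Measure ℝ := gaussianReal βj v with hνdef
  have habs : Measurable (fun x : ℝ => |x|) := continuous_abs.measurable
  -- the set S and T
  set S : Set (ℝ × ℝ) := {p | |p.2| < |p.1|} with hSdef
  set T : Set (ℝ × ℝ) := {p | |p.1| < |p.2|} with hTdef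
  have hS : MeasurableSet S := measurableSet_lt (habs.comp measurable_snd) (habs.comp measurable_fst)
  have hT : MeasurableSet T := measurableSet_lt (habs.comp measurable_fst) (habs.comp measurable_snd)
  -- joint law
  have hmap : P.map (fun ω => (Zi ω, Zj ω)) = μ.prod ν := by
    rw [← hdi, ← hdj]
    exact (indepFun_iff_map_prod_eq_prod_map_map hZi.aemeasurable hZj.aemeasurable).1 hindep
  have hPS : P {ω | |Zj ω| < |Zi ω|} = (μ.prod ν) S := by
    have : {ω | |Zj ω| < |Zi ω|} = (fun ω => (Zi ω, Zj ω)) ⁻¹' S := rfl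
    rw [this, ← Measure.map_apply (hZi.prodMk hZj) hS, hmap]
  -- swap
  have hswap : ∀ (ρ : Measure ℝ) [IsProbabilityMeasure ρ], (ρ.prod ν) S = (ν.prod ρ) T := by
    intro ρ _
    rw [← Measure.prod_swap (μ := ν) (ν := ρ),
      Measure.map_apply measurable_swap hS]
    congr 1
  have hTslice : ∀ (ρ : Measure ℝ) [IsProbabilityMeasure ρ],
      (ν.prod ρ) T = ∫⁻ y, ρ {x | |y| < |x|} ∂ν := by
    intro ρ _
    rw [Measure.prod_apply hT]
    rfl
  -- ν.prod ν of T is 1/2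
  have hE : MeasurableSet {p : ℝ × ℝ | |p.1| = |p.2|} :=
    measurableSet_eq_fun (habs.comp measurable_fst) (habs.comp measurable_snd)
  have hE0 : (ν.prod ν) {p : ℝ × ℝ | |p.1| = |p.2|} = 0 := by
    rw [Measure.prod_apply hE]
    have hz : ∀ y : ℝ, ν (Prod.mk y ⁻¹' {p : ℝ × ℝ | |p.1| = |p.2|}) = 0 := by
      intro y
      have hsub : (Prod.mk y ⁻¹' {p : ℝ × ℝ | |p.1| = |p.2|}) ⊆ {|y|} ∪ {-(|y|)} := by
        intro x hx
        simp only [Set.mem_preimage, Set.mem_setOf_eq] at hx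
        rcases (abs_eq (abs_nonneg y)).1 hx.symm with h | h
        · exact Or.inl h
        · exact Or.inr h
      refine measure_mono_null hsub ?_
      refine le_antisymm ((measure_union_le _ _).trans ?_) zero_le
      rw [gauss_singleton hv, gauss_singleton hv, add_zero]
    simp only [hz, lintegral_zero]
  have hTT : (ν.prod ν) T = 1 / 2 := by
    have hST : (ν.prod ν) S = (ν.prod ν) T := hswap ν
    have hdTS : Disjoint T S := by
      rw [Set.disjoint_left]
      intro p hp hp'
      have h1 : |p.1| < |p.2| := hp
      have h2 : |p.2| < |p.1| := hp'
      exact absurd h2 (not_lt.2 h1.le)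
    have hEdisj : Disjoint (T ∪ S) {p : ℝ × ℝ | |p.1| = |p.2|} := by
      rw [Set.disjoint_left]
      rintro p (h | h) hp' <;>
        [exact absurd (hp' : |p.1| = |p.2|) (h : |p.1| < |p.2|).ne;
         exact absurd (hp' : |p.1| = |p.2|).symm (h : |p.2| < |p.1|).ne]
    have hcover : T ∪ S ∪ {p : ℝ × ℝ | |p.1| = |p.2|} = Set.univ := by
      ext p
      simp only [Set.mem_union, Set.mem_setOf_eq, Set.mem_univ, iff_true, hSdef, hTdef]
      rcases lt_trichotomy (|p.1|) (|p.2|) with h | h | h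
      · exact Or.inl (Or.inl h)
      · exact Or.inr h
      · exact Or.inl (Or.inr h)
    have h1 : (ν.prod ν) (T ∪ S ∪ {p : ℝ × ℝ | |p.1| = |p.2|}) = 1 := by
      rw [hcover, measure_univ]
    rw [measure_union hEdisj hE, measure_union hdTS hS, hE0, add_zero, hST, ← two_mul] at h1
    exact (ENNReal.eq_div_iff two_ne_zero ENNReal.ofNat_ne_top).2 h1
  -- strict comparison of lintegrals
  have hmono : ∀ᵐ y ∂ν, ν {x | |y| < |x|} < μ {x | |y| < |x|} := by
    rw [ae_iff]
    refine measure_mono_null (fun y hy => ?_) (gauss_singleton hv βj 0)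
    simp only [Set.mem_setOf_eq, not_lt] at hy
    by_contra hy0
    have hy0' : (0:ℝ) < |y| := abs_pos.2 hy0
    exact absurd (gauss_tail_lt hv hy0' hβ) (not_lt.2 hy)
  have hgmeas : AEMeasurable (fun y => μ {x | |y| < |x|}) ν := by
    have hanti : Antitone (fun t : ℝ => μ {x | t < |x|}) := by
      intro t1 t2 h12
      exact measure_mono (fun x hx => lt_of_le_of_lt h12 hx)
    exact ((hanti.measurable).comp habs).aemeasurable
  have hfin : (∫⁻ y, ν {x | |y| < |x|} ∂ν) ≠ ∞ := by
    refine ne_top_of_le_ne_top (by simp : (1:ℝ≥0∞) ≠ ∞) ?_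
    calc (∫⁻ y, ν {x | |y| < |x|} ∂ν) ≤ ∫⁻ _, 1 ∂ν := lintegral_mono fun y => prob_le_one
    _ = 1 := by simp
  have hstrict : (∫⁻ y, ν {x | |y| < |x|} ∂ν) < ∫⁻ y, μ {x | |y| < |x|} ∂ν :=
    lintegral_strict_mono (IsProbabilityMeasure.ne_zero ν) hgmeas hfin hmono
  calc (1:ℝ≥0∞)/2 = (ν.prod ν) T := hTT.symm
  _ = ∫⁻ y, ν {x | |y| < |x|} ∂ν := hTslice ν
  _ < ∫⁻ y, μ {x | |y| < |x|} ∂ν := hstrict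
  _ = (ν.prod μ) T := (hTslice μ).symm
  _ = (μ.prod ν) S := (hswap μ).symm
  _ = P {ω | |Zj ω| < |Zi ω|} := hPS.symm
end

section
/- Let σ > 0 and let β_i, β_j be real numbers with |β_i| = |β_j|. Let Z_i and Z_j be independent real random variables with Z_i distributed N(β_i, σ²) and Z_j distributed N(β_j, σ²). Then P(|Z_i| > |Z_j|) = 1/2. -/
open MeasureTheory ProbabilityTheory
open scoped ENNReal NNReal

private lemma aux_half (μ' : Measure ℝ) [IsProbabilityMeasure μ']
    (h : ∀ x : ℝ, μ' {x} = 0) :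
    (μ'.prod μ') {p : ℝ × ℝ | p.2 < p.1} = 1 / 2 := by
  set ρ := μ'.prod μ' with hρ
  have hsym : ρ {p : ℝ × ℝ | p.2 < p.1} = ρ {p : ℝ × ℝ | p.1 < p.2} := by
    have hswap : ρ.map Prod.swap = ρ := Measure.prod_swap
    conv_lhs => rw [← hswap]
    rw [Measure.map_apply measurable_swap (measurableSet_lt measurable_snd measurable_fst)]
    rfl
  have hdiag : ρ {p : ℝ × ℝ | p.1 = p.2} = 0 := by
    rw [hρ, Measure.prod_apply (measurableSet_eq_fun measurable_fst measurable_snd)]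
    have hx : ∀ x : ℝ, μ' (Prod.mk x ⁻¹' {p : ℝ × ℝ | p.1 = p.2}) = 0 := by
      intro x
      have : Prod.mk x ⁻¹' {p : ℝ × ℝ | p.1 = p.2} = {x} := by
        ext y; simp [eq_comm]
      rw [this]; exact h x
    simp_rw [hx, lintegral_zero]
  have hcover : ρ {p : ℝ × ℝ | p.2 < p.1}
      + ρ ({p : ℝ × ℝ | p.1 < p.2} ∪ {p : ℝ × ℝ | p.1 = p.2}) = 1 := by
    rw [← measure_union]
    · have huniv : {p : ℝ × ℝ | p.2 < p.1}
          ∪ ({p : ℝ × ℝ | p.1 < p.2} ∪ {p : ℝ × ℝ | p.1 = p.2}) = Set.univ := by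
        ext p
        simp only [Set.mem_union, Set.mem_setOf_eq, Set.mem_univ, iff_true]
        rcases lt_trichotomy p.2 p.1 with h' | h' | h'
        · exact Or.inl h'
        · exact Or.inr (Or.inr h'.symm)
        · exact Or.inr (Or.inl h')
      rw [huniv, measure_univ]
    · rw [Set.disjoint_left]
      intro p h1 h2
      simp only [Set.mem_setOf_eq, Set.mem_union] at h1 h2
      rcases h2 with h2 | h2
      · exact absurd (h1.trans h2) (lt_irrefl _)
      · exact absurd h2 (ne_of_gt h1)
    · exact (measurableSet_lt measurable_fst measurable_snd).union
        (measurableSet_eq_fun measurable_fst measurable_snd)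
  have h2 : ρ ({p : ℝ × ℝ | p.1 < p.2} ∪ {p : ℝ × ℝ | p.1 = p.2})
      = ρ {p : ℝ × ℝ | p.2 < p.1} := by
    refine le_antisymm ?_ ?_
    · calc ρ ({p : ℝ × ℝ | p.1 < p.2} ∪ {p : ℝ × ℝ | p.1 = p.2})
          ≤ ρ {p : ℝ × ℝ | p.1 < p.2} + ρ {p : ℝ × ℝ | p.1 = p.2} := measure_union_le _ _
        _ = ρ {p : ℝ × ℝ | p.2 < p.1} := by rw [hdiag, add_zero, ← hsym]
    · rw [hsym]; exact measure_mono Set.subset_union_left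
  rw [h2] at hcover
  rw [ENNReal.eq_div_iff (by norm_num) (by norm_num), two_mul]
  exact hcover

/-- Lemma 1 (second part): if `|βi| = |βj|`, `Zi ~ N(βi, σ²)`, `Zj ~ N(βj, σ²)` are
independent, then `P(|Zi| > |Zj|) = 1/2`. -/
theorem stmt_1 {Ω : Type*} [MeasurableSpace Ω] (P : Measure Ω) [IsProbabilityMeasure P]
    (σ : ℝ≥0) (hσ : 0 < σ) (βi βj : ℝ) (hβ : |βi| = |βj|)
    (Zi Zj : Ω → ℝ) (hZi : Measurable Zi) (hZj : Measurable Zj)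
    (hindep : IndepFun Zi Zj P)
    (hdi : P.map Zi = gaussianReal βi (σ ^ 2))
    (hdj : P.map Zj = gaussianReal βj (σ ^ 2)) :
    P {ω | |Zj ω| < |Zi ω|} = 1 / 2 := by
  have hv : (σ ^ 2 : ℝ≥0) ≠ 0 := by positivity
  have habsmeas : Measurable fun x : ℝ => |x| := by fun_prop
  -- The laws of |Zi| and |Zj| coincide.
  have habs : (gaussianReal βj (σ ^ 2)).map (fun x => |x|)
      = (gaussianReal βi (σ ^ 2)).map (fun x => |x|) := by
    rcases abs_eq_abs.mp hβ.symm with h | h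
    · rw [h]
    · have hneg : gaussianReal βj (σ ^ 2)
          = (gaussianReal βi (σ ^ 2)).map (fun x => (-1 : ℝ) * x) := by
        rw [gaussianReal_map_const_mul, h]
        norm_num
      rw [hneg, Measure.map_map (by fun_prop) (by fun_prop)]
      congr 1
      ext x
      simp [Function.comp, abs_neg]
  have hμ'prob : IsProbabilityMeasure ((gaussianReal βi (σ ^ 2)).map (fun x => |x|)) :=
    Measure.isProbabilityMeasure_map habsmeas.aemeasurable
  -- no atoms
  have hμ'sing : ∀ x : ℝ, (gaussianReal βi (σ ^ 2)).map (fun x => |x|) {x} = 0 := by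
    intro x
    rw [Measure.map_apply habsmeas (measurableSet_singleton x)]
    have hsub : (fun y : ℝ => |y|) ⁻¹' {x} ⊆ {x} ∪ {-x} := by
      intro y hy
      simp only [Set.mem_preimage, Set.mem_singleton_iff] at hy
      rcases abs_choice y with h | h
      · left; simp only [Set.mem_singleton_iff]; rw [← hy, h]
      · right; simp only [Set.mem_singleton_iff]; rw [← hy, h, neg_neg]
    have h0 : ∀ z : ℝ, gaussianReal βi (σ ^ 2) {z} = 0 := fun z =>
      gaussianReal_absolutelyContinuous βi hv Real.volume_singleton
    exact measure_mono_null hsub (measure_union_null (h0 x) (h0 (-x)))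
  -- joint law
  have hjoint : P.map (fun ω => (Zi ω, Zj ω))
      = (gaussianReal βi (σ ^ 2)).prod (gaussianReal βj (σ ^ 2)) := by
    rw [← hdi, ← hdj]
    exact (indepFun_iff_map_prod_eq_prod_map_map hZi.aemeasurable hZj.aemeasurable).mp hindep
  have hφ : Measurable (Prod.map (fun x : ℝ => |x|) (fun x : ℝ => |x|)) :=
    habsmeas.prodMap habsmeas
  have hmeas : MeasurableSet {p : ℝ × ℝ | p.2 < p.1} :=
    measurableSet_lt measurable_snd measurable_fst
  have hkey : P {ω | |Zj ω| < |Zi ω|}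
      = (((gaussianReal βi (σ ^ 2)).map (fun x => |x|)).prod
          ((gaussianReal βj (σ ^ 2)).map (fun x => |x|))) {p : ℝ × ℝ | p.2 < p.1} := by
    rw [Measure.map_prod_map _ _ habsmeas habsmeas, ← hjoint,
      Measure.map_apply hφ hmeas,
      Measure.map_apply (hZi.prodMk hZj) (hφ hmeas)]
    rfl
  rw [hkey, habs]
  exact aux_half _ hμ'sing
end

section
/- Let σ > 0, let 0 ≤ a < b be real numbers, and let z > 0. Then Φ((z − a)/σ) + Φ((z + a)/σ) > Φ((z − b)/σ) + Φ((z + b)/σ). Equivalently, for z > 0 the folded-normal CDF value P(|N(a, σ²)| ≤ z) strictly exceeds P(|N(b, σ²)| ≤ z), so |N(b, σ²)| strictly stochastically dominates |N(a, σ²)|. -/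
open MeasureTheory ProbabilityTheory
open scoped ENNReal NNReal

/-- `Φ`, the cumulative distribution function of the standard normal distribution. -/
noncomputable def stdNormalCDF (x : ℝ) : ℝ :=
  (gaussianReal 0 1 (Set.Iic x)).toReal

lemma stdNormalCDF_eq (x : ℝ) :
    stdNormalCDF x = ∫ t in Set.Iic x, gaussianPDFReal 0 1 t := by
  rw [stdNormalCDF, gaussianReal_apply_eq_integral 0 one_ne_zero,
    ENNReal.toReal_ofReal]
  exact setIntegral_nonneg measurableSet_Iic fun t _ => gaussianPDFReal_nonneg 0 1 t

lemma stdNormalCDF_sub (u v : ℝ) :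
    stdNormalCDF v - stdNormalCDF u = ∫ t in u..v, gaussianPDFReal 0 1 t := by
  rw [stdNormalCDF_eq, stdNormalCDF_eq]
  exact intervalIntegral.integral_Iic_sub_Iic
    (integrable_gaussianPDFReal 0 1).integrableOn
    (integrable_gaussianPDFReal 0 1).integrableOn

lemma gaussianPDFReal_even (x : ℝ) :
    gaussianPDFReal 0 1 (-x) = gaussianPDFReal 0 1 x := by
  simp [gaussianPDFReal, neg_sq]

lemma gaussianPDFReal_lt {x y : ℝ} (h : x ^ 2 < y ^ 2) :
    gaussianPDFReal 0 1 y < gaussianPDFReal 0 1 x := by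
  unfold gaussianPDFReal
  have hpos : (0 : ℝ) < (Real.sqrt (2 * Real.pi * (1 : ℝ≥0)))⁻¹ := by
    rw [inv_pos]
    apply Real.sqrt_pos.mpr
    positivity
  apply mul_lt_mul_of_pos_left _ hpos
  apply Real.exp_lt_exp.mpr
  simp only [sub_zero, NNReal.coe_one, mul_one]
  linarith

lemma gaussianPDFReal_continuous : Continuous (gaussianPDFReal 0 1) := by
  unfold gaussianPDFReal
  fun_prop

/-- Strict stochastic dominance of folded normals: for `σ > 0`, `0 ≤ a < b` and `z > 0`,
`Φ((z − a)/σ) + Φ((z + a)/σ) > Φ((z − b)/σ) + Φ((z + b)/σ)`. -/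
theorem stmt_3 (σ : ℝ) (hσ : 0 < σ) (a b : ℝ) (ha : 0 ≤ a) (hab : a < b)
    (z : ℝ) (hz : 0 < z) :
    stdNormalCDF ((z - b) / σ) + stdNormalCDF ((z + b) / σ) <
      stdNormalCDF ((z - a) / σ) + stdNormalCDF ((z + a) / σ) := by
  have huv : (a - z) / σ < (b - z) / σ := by
    apply div_lt_div_of_pos_right _ hσ
    linarith
  have h1 : stdNormalCDF ((z + b) / σ) - stdNormalCDF ((z + a) / σ)
      = ∫ t in ((a - z) / σ)..((b - z) / σ), gaussianPDFReal 0 1 (t + 2 * z / σ) := by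
    rw [stdNormalCDF_sub, intervalIntegral.integral_comp_add_right]
    congr 1 <;> field_simp <;> ring
  have h2 : stdNormalCDF ((z - a) / σ) - stdNormalCDF ((z - b) / σ)
      = ∫ t in ((a - z) / σ)..((b - z) / σ), gaussianPDFReal 0 1 t := by
    rw [stdNormalCDF_sub]
    have heq : (∫ t in ((a - z) / σ)..((b - z) / σ), gaussianPDFReal 0 1 t)
        = ∫ t in ((a - z) / σ)..((b - z) / σ), gaussianPDFReal 0 1 (-t) := by
      simp [gaussianPDFReal_even]
    rw [heq, intervalIntegral.integral_comp_neg]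
    congr 1 <;> field_simp <;> ring
  have hhalf : (-z) / σ ≤ (a - z) / σ := by
    gcongr
    linarith
  have hlt : ∀ x : ℝ, (a - z) / σ < x →
      gaussianPDFReal 0 1 (x + 2 * z / σ) < gaussianPDFReal 0 1 x := by
    intro x hx
    apply gaussianPDFReal_lt
    have hx' : (-z) / σ < x := lt_of_le_of_lt hhalf hx
    have hzσ : 0 < z / σ := div_pos hz hσ
    have h2z : 2 * z / σ = 2 * (z / σ) := by ring
    rw [h2z]
    have : -(z / σ) < x := by rw [neg_div] at hx'; linarith
    nlinarith
  have key : (∫ t in ((a - z) / σ)..((b - z) / σ), gaussianPDFReal 0 1 (t + 2 * z / σ))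
      < ∫ t in ((a - z) / σ)..((b - z) / σ), gaussianPDFReal 0 1 t := by
    apply intervalIntegral.integral_lt_integral_of_continuousOn_of_le_of_exists_lt huv
    · exact (gaussianPDFReal_continuous.comp (continuous_id.add continuous_const)).continuousOn
    · exact gaussianPDFReal_continuous.continuousOn
    · exact fun x hx => (hlt x hx.1).le
    · exact ⟨(b - z) / σ, ⟨huv.le, le_refl _⟩, hlt _ huv⟩
  linarith
end

section
/- Let n, p ≥ 1, let X be an n × p real matrix, β₀ ∈ ℝᵖ, and let d, D > 0 be such that nd ‖v‖² ≤ vᵀ(XᵀX)v ≤ nD ‖v‖² for all v ∈ ℝᵖ. Let ε : Ω → ℝⁿ be a random vector on a probability space with square-integrable components satisfying E[ε_i] = 0, E[ε_i²] = σ², and E[ε_i ε_j] = 0 for i ≠ j. Let λ > 0, set y = Xβ₀ + ε, and let β̂ = (XᵀX + λI_p)⁻¹ Xᵀ y be the ridge estimator. Then E[‖β̂ − β₀‖²] ≤ 2 (λ² ‖β₀‖² + n p D σ²) / (nd + λ)². -/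
open MeasureTheory Matrix BigOperators


lemma aux_det {p : ℕ} {A : Matrix (Fin p) (Fin p) ℝ} {c : ℝ} (hc : 0 < c)
    (hpd : ∀ w : Fin p → ℝ, c * (∑ j, (w j) ^ 2) ≤ w ⬝ᵥ A.mulVec w) :
    IsUnit A.det := by
  rw [isUnit_iff_ne_zero]
  intro hdet
  obtain ⟨v, hv, hv0⟩ := (Matrix.exists_mulVec_eq_zero_iff).2 hdet
  have h := hpd v
  rw [hv0, dotProduct_zero] at h
  have hS : (∑ j, (v j) ^ 2) ≤ 0 := by nlinarith
  have hS0 : (∑ j, (v j) ^ 2) = 0 :=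
    le_antisymm hS (Finset.sum_nonneg fun j _ => sq_nonneg _)
  apply hv
  funext j
  have := (Finset.sum_eq_zero_iff_of_nonneg (fun j _ => sq_nonneg (v j))).1 hS0 j (Finset.mem_univ j)
  exact pow_eq_zero_iff (by norm_num) |>.1 this

lemma aux_inv_norm {p : ℕ} {A : Matrix (Fin p) (Fin p) ℝ} {c : ℝ} (hc : 0 < c)
    (hpd : ∀ w : Fin p → ℝ, c * (∑ j, (w j) ^ 2) ≤ w ⬝ᵥ A.mulVec w) (v : Fin p → ℝ) :
    ∑ k, (A⁻¹.mulVec v k) ^ 2 ≤ (∑ k, (v k) ^ 2) / c ^ 2 := by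
  have hu := aux_det hc hpd
  set w := A⁻¹.mulVec v with hw
  have hAw : A.mulVec w = v := by
    rw [hw, Matrix.mulVec_mulVec, Matrix.mul_nonsing_inv A hu, Matrix.one_mulVec]
  have h1 : c * (∑ j, (w j) ^ 2) ≤ w ⬝ᵥ v := by rw [← hAw]; exact hpd w
  have hCS : (w ⬝ᵥ v) ^ 2 ≤ (∑ j, (w j) ^ 2) * (∑ k, (v k) ^ 2) := by
    simpa [dotProduct, pow_two] using Finset.sum_mul_sq_le_sq_mul_sq Finset.univ w v
  have hSnn : 0 ≤ ∑ j, (w j) ^ 2 := Finset.sum_nonneg fun j _ => sq_nonneg _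
  have hTnn : 0 ≤ ∑ k, (v k) ^ 2 := Finset.sum_nonneg fun k _ => sq_nonneg _
  rw [le_div_iff₀ (by positivity)]
  rcases eq_or_lt_of_le hSnn with h0 | h0
  · rw [← h0]; simpa using hTnn
  · have h2 : (c * ∑ j, (w j) ^ 2) ^ 2 ≤ (w ⬝ᵥ v) ^ 2 :=
      pow_le_pow_left₀ (by positivity) h1 2
    nlinarith [h2, hCS, h0]


lemma aux_exp {Ω : Type*} [MeasurableSpace Ω] (P : Measure Ω) [IsProbabilityMeasure P]
    {n : ℕ} (σ : ℝ) (ε : Ω → Fin n → ℝ)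
    (hL2 : ∀ i, MemLp (fun ω => ε ω i) 2 P)
    (hvar : ∀ i, ∫ ω, (ε ω i) ^ 2 ∂P = σ ^ 2)
    (hcov : ∀ i j, i ≠ j → ∫ ω, ε ω i * ε ω j ∂P = 0)
    (c : Fin n → ℝ) :
    Integrable (fun ω => (∑ i, c i * ε ω i) ^ 2) P ∧
      ∫ ω, (∑ i, c i * ε ω i) ^ 2 ∂P = σ ^ 2 * ∑ i, (c i) ^ 2 := by
  have hprod : ∀ i k : Fin n, Integrable (fun ω => ε ω i * ε ω k) P := by
    intro i k
    have h := ((hL2 i).smul (hL2 k) (r := 1) :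
      MemLp ((fun ω => ε ω k) • (fun ω => ε ω i)) 1 P)
    have := memLp_one_iff_integrable.1 h
    simpa [Pi.smul_apply, smul_eq_mul, mul_comm, Pi.mul_def] using this
  have hint : ∀ i k : Fin n, Integrable (fun ω => (c i * ε ω i) * (c k * ε ω k)) P := by
    intro i k
    have := ((hprod i k).const_mul (c i * c k))
    convert this using 2 with ω
    ring
  have hexp : (fun ω => (∑ i, c i * ε ω i) ^ 2) =
      fun ω => ∑ i, ∑ k, (c i * ε ω i) * (c k * ε ω k) := by
    funext ω
    rw [pow_two, Finset.sum_mul_sum]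
  constructor
  · rw [hexp]
    exact integrable_finset_sum _ fun i _ => integrable_finset_sum _ fun k _ => hint i k
  · rw [hexp]
    rw [integral_finset_sum _ fun i _ => integrable_finset_sum _ fun k _ => hint i k]
    have : ∀ i : Fin n, ∫ ω, ∑ k, (c i * ε ω i) * (c k * ε ω k) ∂P
        = σ ^ 2 * (c i) ^ 2 := by
      intro i
      rw [integral_finset_sum _ fun k _ => hint i k]
      have hterm : ∀ k : Fin n, ∫ ω, (c i * ε ω i) * (c k * ε ω k) ∂P
          = (c i * c k) * ∫ ω, ε ω i * ε ω k ∂P := by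
        intro k
        rw [show (fun ω => (c i * ε ω i) * (c k * ε ω k))
            = fun ω => (c i * c k) * (ε ω i * ε ω k) from funext fun ω => by ring,
          integral_const_mul]
      rw [Finset.sum_congr rfl fun k _ => hterm k]
      rw [Finset.sum_eq_single i]
      · rw [show (∫ ω, ε ω i * ε ω i ∂P) = σ ^ 2 by
          rw [← hvar i]; congr 1; funext ω; ring]
        ring
      · intro k _ hk
        rw [hcov i k (Ne.symm hk), mul_zero]
      · intro h; exact absurd (Finset.mem_univ i) h
    rw [Finset.sum_congr rfl fun i _ => this i, ← Finset.mul_sum]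

/-- Ridge risk bound (equation (18) in the proof of Theorem 1 of the paper): under the
eigenvalue condition `nd‖v‖² ≤ vᵀXᵀXv ≤ nD‖v‖²` and uncorrelated mean-zero errors with
variance `σ²`, the ridge estimator `β̂ = (XᵀX + λI)⁻¹Xᵀy` with `y = Xβ₀ + ε` satisfies
`E‖β̂ − β₀‖² ≤ 2(λ²‖β₀‖² + npDσ²)/(nd + λ)²`. -/
theorem stmt_10 {Ω : Type*} [MeasurableSpace Ω] (P : Measure Ω) [IsProbabilityMeasure P]
    {n p : ℕ} (X : Matrix (Fin n) (Fin p) ℝ) (β₀ : Fin p → ℝ)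
    (d D : ℝ) (hd : 0 < d) (hD : 0 < D)
    (heig : ∀ v : Fin p → ℝ,
      (n : ℝ) * d * (∑ j, (v j) ^ 2) ≤ v ⬝ᵥ (Xᵀ * X).mulVec v ∧
      v ⬝ᵥ (Xᵀ * X).mulVec v ≤ (n : ℝ) * D * (∑ j, (v j) ^ 2))
    (σ : ℝ) (ε : Ω → Fin n → ℝ)
    (hL2 : ∀ i, MemLp (fun ω => ε ω i) 2 P)
    (hmean : ∀ i, ∫ ω, ε ω i ∂P = 0)
    (hvar : ∀ i, ∫ ω, (ε ω i) ^ 2 ∂P = σ ^ 2)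
    (hcov : ∀ i j, i ≠ j → ∫ ω, ε ω i * ε ω j ∂P = 0)
    (lam : ℝ) (hlam : 0 < lam)
    (βhat : Ω → Fin p → ℝ)
    (hβhat : ∀ ω, βhat ω =
      (Xᵀ * X + lam • (1 : Matrix (Fin p) (Fin p) ℝ))⁻¹.mulVec
        (Xᵀ.mulVec (X.mulVec β₀ + ε ω))) :
    ∫ ω, ∑ j, (βhat ω j - β₀ j) ^ 2 ∂P ≤
      2 * (lam ^ 2 * (∑ j, (β₀ j) ^ 2) + (n : ℝ) * (p : ℝ) * D * σ ^ 2) /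
        ((n : ℝ) * d + lam) ^ 2 := by
  set A : Matrix (Fin p) (Fin p) ℝ := Xᵀ * X + lam • (1 : Matrix (Fin p) (Fin p) ℝ) with hA
  set c₀ : ℝ := (n : ℝ) * d + lam with hc₀
  have hc : 0 < c₀ := by positivity
  -- positive definiteness of A
  have hpd : ∀ w : Fin p → ℝ, c₀ * (∑ j, (w j) ^ 2) ≤ w ⬝ᵥ A.mulVec w := by
    intro w
    have h1 : A.mulVec w = (Xᵀ * X).mulVec w + lam • w := by
      rw [hA, Matrix.add_mulVec, Matrix.smul_mulVec, Matrix.one_mulVec]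
    rw [h1, dotProduct_add, dotProduct_smul, smul_eq_mul]
    have h2 : w ⬝ᵥ w = ∑ j, (w j) ^ 2 := by
      simp [dotProduct, pow_two]
    rw [h2]
    have := (heig w).1
    rw [hc₀]; ring_nf; ring_nf at this ⊢; nlinarith [this]
  have hu : IsUnit A.det := aux_det hc hpd
  -- symmetry of A and A⁻¹
  have hAsymm : Aᵀ = A := by
    rw [hA]
    simp [Matrix.transpose_add, Matrix.transpose_mul, Matrix.transpose_smul]
  have hAinvsymm : A⁻¹ᵀ = A⁻¹ := by
    rw [Matrix.transpose_nonsing_inv, hAsymm]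
  set M : Matrix (Fin p) (Fin n) ℝ := A⁻¹ * Xᵀ with hM
  -- decomposition of the error
  have hdec : ∀ ω, βhat ω = fun j =>
      β₀ j + (M.mulVec (ε ω) j - lam * (A⁻¹.mulVec β₀) j) := by
    intro ω
    have h1 : A⁻¹ * (Xᵀ * X) = 1 - lam • A⁻¹ := by
      have h2 : Xᵀ * X = A - lam • (1 : Matrix (Fin p) (Fin p) ℝ) := by
        rw [hA, add_sub_cancel_right]
      rw [h2, Matrix.mul_sub, Matrix.nonsing_inv_mul A hu, Matrix.mul_smul, Matrix.mul_one]
    rw [hβhat, Matrix.mulVec_add, Matrix.mulVec_add, Matrix.mulVec_mulVec,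
      Matrix.mulVec_mulVec, Matrix.mulVec_mulVec, Matrix.mul_assoc, h1, ← hM]
    funext j
    simp [Matrix.sub_mulVec, Matrix.one_mulVec, Matrix.smul_mulVec]
    ring
  -- norms
  set Sa : ℝ := ∑ j, ((A⁻¹.mulVec β₀) j) ^ 2 with hSa
  have hSabound : Sa ≤ (∑ j, (β₀ j) ^ 2) / c₀ ^ 2 := aux_inv_norm hc hpd β₀
  -- row bound for M
  have hrow : ∀ j : Fin p, ∑ i, (M j i) ^ 2 ≤ (n : ℝ) * D / c₀ ^ 2 := by
    intro j
    set w : Fin p → ℝ := A⁻¹.mulVec (Pi.single j 1) with hw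
    have hwj : ∀ i, M j i = (X.mulVec w) i := by
      intro i
      have hsym : ∀ a b, A⁻¹ a b = A⁻¹ b a := by
        intro a b
        conv_lhs => rw [← hAinvsymm, Matrix.transpose_apply]
      have h1 : ∀ k, w k = A⁻¹ j k := by
        intro k
        rw [hw]
        simp [Matrix.mulVec, dotProduct, Pi.single_apply, hsym k j]
      simp only [Matrix.mulVec, dotProduct, hM, Matrix.mul_apply, Matrix.transpose_apply]
      exact Finset.sum_congr rfl fun k _ => by rw [h1 k]; ring
    have h2 : ∑ i, (M j i) ^ 2 = w ⬝ᵥ (Xᵀ * X).mulVec w := by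
      rw [Finset.sum_congr rfl fun i _ => by rw [hwj i]]
      rw [← Matrix.mulVec_mulVec, Matrix.dotProduct_mulVec, Matrix.vecMul_transpose]
      simp [dotProduct, pow_two]
    rw [h2]
    have h3 := (heig w).2
    have h4 : ∑ k, (w k) ^ 2 ≤ (∑ k, ((Pi.single j 1 : Fin p → ℝ) k) ^ 2) / c₀ ^ 2 :=
      aux_inv_norm hc hpd _
    have h5 : ∑ k, ((Pi.single j 1 : Fin p → ℝ) k) ^ 2 = 1 := by
      simp [Pi.single_apply, sq]
    rw [h5] at h4
    calc w ⬝ᵥ (Xᵀ * X).mulVec w ≤ (n : ℝ) * D * (∑ k, (w k) ^ 2) := h3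
      _ ≤ (n : ℝ) * D * (1 / c₀ ^ 2) := by
          apply mul_le_mul_of_nonneg_left h4 (by positivity)
      _ = (n : ℝ) * D / c₀ ^ 2 := by ring
  -- the dominating function
  set g : Ω → ℝ := fun ω =>
    2 * lam ^ 2 * Sa + 2 * ∑ j, (∑ i, M j i * ε ω i) ^ 2 with hg
  have haux := fun j : Fin p => aux_exp P σ ε hL2 hvar hcov (fun i => M j i)
  have hgint : Integrable g P := by
    apply Integrable.add (integrable_const _)
    exact (integrable_finset_sum _ fun j _ => (haux j).1).const_mul 2
  have hle : ∀ ω, ∑ j, (βhat ω j - β₀ j) ^ 2 ≤ g ω := by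
    intro ω
    have h1 : ∀ j, (βhat ω j - β₀ j) ^ 2 ≤
        2 * lam ^ 2 * ((A⁻¹.mulVec β₀) j) ^ 2 + 2 * (∑ i, M j i * ε ω i) ^ 2 := by
      intro j
      have h2 : βhat ω j - β₀ j = (∑ i, M j i * ε ω i) - lam * (A⁻¹.mulVec β₀) j := by
        rw [hdec ω]
        simp [Matrix.mulVec, dotProduct]
      rw [h2]
      nlinarith [sq_nonneg ((∑ i, M j i * ε ω i) + lam * (A⁻¹.mulVec β₀) j)]
    calc ∑ j, (βhat ω j - β₀ j) ^ 2
        ≤ ∑ j, (2 * lam ^ 2 * ((A⁻¹.mulVec β₀) j) ^ 2 + 2 * (∑ i, M j i * ε ω i) ^ 2) :=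
          Finset.sum_le_sum fun j _ => h1 j
      _ = g ω := by
          rw [hg, Finset.sum_add_distrib, ← Finset.mul_sum, ← Finset.mul_sum, hSa]
  have hmono : ∫ ω, ∑ j, (βhat ω j - β₀ j) ^ 2 ∂P ≤ ∫ ω, g ω ∂P := by
    apply integral_mono_of_nonneg
    · exact Filter.Eventually.of_forall fun ω => Finset.sum_nonneg fun j _ => sq_nonneg _
    · exact hgint
    · exact Filter.Eventually.of_forall hle
  -- compute ∫ g
  have hgval : ∫ ω, g ω ∂P = 2 * lam ^ 2 * Sa + 2 * ∑ j, σ ^ 2 * ∑ i, (M j i) ^ 2 := by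
    rw [hg]
    rw [integral_add (integrable_const _)
      ((integrable_finset_sum _ fun j _ => (haux j).1).const_mul 2)]
    rw [integral_const]
    simp only [measure_univ, ENNReal.toReal_one, smul_eq_mul, one_mul, probReal_univ]
    congr 1
    rw [integral_const_mul, integral_finset_sum _ fun j _ => (haux j).1]
    congr 1
    exact Finset.sum_congr rfl fun j _ => (haux j).2
  -- final bound
  have hσ : (0:ℝ) ≤ σ ^ 2 := sq_nonneg σ
  have hsum : ∑ j, σ ^ 2 * ∑ i, (M j i) ^ 2 ≤ (p : ℝ) * (σ ^ 2 * ((n : ℝ) * D / c₀ ^ 2)) := by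
    calc ∑ j, σ ^ 2 * ∑ i, (M j i) ^ 2
        ≤ ∑ _j : Fin p, σ ^ 2 * ((n : ℝ) * D / c₀ ^ 2) :=
          Finset.sum_le_sum fun j _ => mul_le_mul_of_nonneg_left (hrow j) hσ
      _ = (p : ℝ) * (σ ^ 2 * ((n : ℝ) * D / c₀ ^ 2)) := by
          rw [Finset.sum_const, Finset.card_univ, Fintype.card_fin, nsmul_eq_mul]
  calc ∫ ω, ∑ j, (βhat ω j - β₀ j) ^ 2 ∂P ≤ ∫ ω, g ω ∂P := hmono
    _ = 2 * lam ^ 2 * Sa + 2 * ∑ j, σ ^ 2 * ∑ i, (M j i) ^ 2 := hgval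
    _ ≤ 2 * lam ^ 2 * ((∑ j, (β₀ j) ^ 2) / c₀ ^ 2)
        + 2 * ((p : ℝ) * (σ ^ 2 * ((n : ℝ) * D / c₀ ^ 2))) := by
        have := mul_le_mul_of_nonneg_left hSabound (by positivity : (0:ℝ) ≤ 2 * lam ^ 2)
        have := mul_le_mul_of_nonneg_left hsum (by norm_num : (0:ℝ) ≤ 2)
        linarith
    _ = 2 * (lam ^ 2 * (∑ j, (β₀ j) ^ 2) + (n : ℝ) * (p : ℝ) * D * σ ^ 2) / c₀ ^ 2 := by
        field_simp
end

section
/- Let X be an n × p real matrix, β₀, β̂ ∈ ℝᵖ, ε ∈ ℝⁿ, and L ≥ 0 with vᵀ(XᵀX)v ≤ L‖v‖² for all v ∈ ℝᵖ. Define the residual vector ê = Xβ₀ + ε − Xβ̂, let ê̄ = (1/n)Σ_i ê_i and ε̄ = (1/n)Σ_i ε_i, and set s = √((1/n)Σ_i(ê_i − ê̄)²) and σ̂ = √((1/n)Σ_i(ε_i − ε̄)²). Then |s − σ̂| ≤ √(L/n) · ‖β₀ − β̂‖. -/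
open Matrix BigOperators

lemma stmt_13_aux1 {n : ℕ} (a b : Fin n → ℝ) :
    |Real.sqrt (∑ i, a i ^ 2) - Real.sqrt (∑ i, b i ^ 2)| ≤ Real.sqrt (∑ i, (a i - b i) ^ 2) := by
  have h := abs_norm_sub_norm_le (E := EuclideanSpace ℝ (Fin n)) (WithLp.toLp 2 a) (WithLp.toLp 2 b)
  simpa [EuclideanSpace.norm_eq, sq_abs, sub_eq_add_neg] using h

lemma stmt_13_aux2 {n p : ℕ} (X : Matrix (Fin n) (Fin p) ℝ) (v : Fin p → ℝ) :
    ∑ i, (X.mulVec v i) ^ 2 = v ⬝ᵥ (Xᵀ * X).mulVec v := by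
  simp only [dotProduct, mulVec, Matrix.mul_apply, transpose_apply, sq,
    Finset.sum_mul, Finset.mul_sum]
  rw [Finset.sum_comm]
  congr 1; ext i
  rw [Finset.sum_comm]
  congr 1; ext j
  congr 1; ext k
  ring

/-- Deterministic residual–error standard deviation bound from the proof of Lemma 2 of
the paper: with residuals `ê = Xβ₀ + ε − Xβ̂` and `vᵀXᵀXv ≤ L‖v‖²`,
`|s − σ̂| ≤ √(L/n)·‖β₀ − β̂‖` where `s`, `σ̂` are the centered root mean squares of
`ê` and `ε`. -/
theorem stmt_13 {n p : ℕ} (X : Matrix (Fin n) (Fin p) ℝ)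
    (β₀ βhat : Fin p → ℝ) (ε : Fin n → ℝ) (L : ℝ) (hL : 0 ≤ L)
    (hop : ∀ v : Fin p → ℝ, v ⬝ᵥ (Xᵀ * X).mulVec v ≤ L * ∑ j, (v j) ^ 2)
    (e : Fin n → ℝ) (he : ∀ i, e i = X.mulVec β₀ i + ε i - X.mulVec βhat i)
    (ebar εbar s σhat : ℝ)
    (hebar : ebar = (∑ i, e i) / n)
    (hεbar : εbar = (∑ i, ε i) / n)
    (hs : s = Real.sqrt ((∑ i, (e i - ebar) ^ 2) / n))
    (hσhat : σhat = Real.sqrt ((∑ i, (ε i - εbar) ^ 2) / n)) :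
    |s - σhat| ≤ Real.sqrt (L / n) * Real.sqrt (∑ j, (β₀ j - βhat j) ^ 2) := by
  rcases Nat.eq_zero_or_pos n with hn | hn
  · subst hn
    simp only [hs, hσhat, Finset.univ_eq_empty, Finset.sum_empty, Nat.cast_zero, zero_div,
      Real.sqrt_zero, sub_zero, abs_zero]
    positivity
  · have hn' : (0:ℝ) < n := by exact_mod_cast hn
    set δ : Fin p → ℝ := fun j => β₀ j - βhat j with hδ
    set d : Fin n → ℝ := X.mulVec δ with hdd
    set S : ℝ := ∑ j, (β₀ j - βhat j) ^ 2 with hS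
    have hSnn : 0 ≤ S := by positivity
    have hδS : ∑ j, δ j ^ 2 = S := rfl
    have hdsum : ∑ i, d i ^ 2 ≤ L * S := by
      calc ∑ i, d i ^ 2 = δ ⬝ᵥ (Xᵀ * X).mulVec δ := stmt_13_aux2 X δ
        _ ≤ L * ∑ j, δ j ^ 2 := hop δ
        _ = L * S := by rw [hδS]
    have hde : ∀ i, e i - ε i = d i := by
      intro i
      rw [he]
      have h1 : X.mulVec β₀ i - X.mulVec βhat i = d i := by
        have hδeq : δ = β₀ - βhat := rfl
        rw [hdd, hδeq, Matrix.mulVec_sub]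
        rfl
      linarith
    set dbar : ℝ := (∑ i, d i) / n with hdbar
    have hbar : ebar - εbar = dbar := by
      rw [hebar, hεbar, hdbar, div_sub_div_same]
      congr 1
      rw [← Finset.sum_sub_distrib]
      exact Finset.sum_congr rfl (fun i _ => hde i)
    have key := stmt_13_aux1 (fun i => e i - ebar) (fun i => ε i - εbar)
    have hptw : ∀ i : Fin n, (e i - ebar) - (ε i - εbar) = d i - dbar := by
      intro i
      have h1 := hde i
      linarith [hbar]
    have key2 : |Real.sqrt (∑ i, (e i - ebar) ^ 2) - Real.sqrt (∑ i, (ε i - εbar) ^ 2)|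
        ≤ Real.sqrt (∑ i, (d i - dbar) ^ 2) := by
      calc |Real.sqrt (∑ i, (e i - ebar) ^ 2) - Real.sqrt (∑ i, (ε i - εbar) ^ 2)|
          ≤ Real.sqrt (∑ i, ((e i - ebar) - (ε i - εbar)) ^ 2) := key
        _ = Real.sqrt (∑ i, (d i - dbar) ^ 2) := by
            congr 1
            exact Finset.sum_congr rfl (fun i _ => by rw [hptw i])
    have hcent : ∑ i, (d i - dbar) ^ 2 ≤ ∑ i, d i ^ 2 := by
      have hsumd : ∑ i, d i = n * dbar := by
        rw [hdbar]; field_simp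
      have hexp : ∑ i, (d i - dbar) ^ 2
          = (∑ i, d i ^ 2) - 2 * dbar * (∑ i, d i) + n * dbar ^ 2 := by
        have h1 : ∀ i : Fin n, (d i - dbar) ^ 2 = d i ^ 2 - 2 * dbar * d i + dbar ^ 2 :=
          fun i => by ring
        rw [Finset.sum_congr rfl (fun i _ => h1 i), Finset.sum_add_distrib,
          Finset.sum_sub_distrib, ← Finset.mul_sum]
        simp [Finset.card_univ]
      rw [hsumd] at hexp
      nlinarith [mul_nonneg hn'.le (sq_nonneg dbar), sq_nonneg dbar]
    have hA : (0:ℝ) ≤ ∑ i, (e i - ebar) ^ 2 := by positivity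
    have hB : (0:ℝ) ≤ ∑ i, (ε i - εbar) ^ 2 := by positivity
    have hfinal : Real.sqrt (∑ i, (d i - dbar) ^ 2) ≤ Real.sqrt (L * S) :=
      Real.sqrt_le_sqrt (le_trans hcent hdsum)
    have hrhs : Real.sqrt (L / n) * Real.sqrt S = Real.sqrt (L * S) / Real.sqrt n := by
      rw [← Real.sqrt_mul (div_nonneg hL hn'.le) S,
        ← Real.sqrt_div (mul_nonneg hL hSnn) (n:ℝ), div_mul_eq_mul_div]
    calc |s - σhat|
        = |Real.sqrt (∑ i, (e i - ebar) ^ 2) - Real.sqrt (∑ i, (ε i - εbar) ^ 2)|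
            / Real.sqrt n := by
          rw [hs, hσhat, Real.sqrt_div hA, Real.sqrt_div hB, ← sub_div, abs_div,
            abs_of_nonneg (Real.sqrt_nonneg (n:ℝ))]
      _ ≤ Real.sqrt (∑ i, (d i - dbar) ^ 2) / Real.sqrt n := by
          gcongr
      _ ≤ Real.sqrt (L * S) / Real.sqrt n := by gcongr
      _ = Real.sqrt (L / n) * Real.sqrt S := hrhs.symm
end

section
/- Let X be an n × p real matrix, y ∈ ℝⁿ, λ₂ ≥ 0, λ₁ ≥ 0, and ω_1, …, ω_p ≥ 0, and suppose ζ ≥ 0 satisfies ζ‖v‖² ≤ vᵀ(XᵀX)v for all v ∈ ℝᵖ, with ζ + λ₂ > 0. Let β₁ be a minimizer over ℝᵖ of f(β) = ‖y − Xβ‖² + λ₂‖β‖², and let β₂ be a minimizer over ℝᵖ of f(β) + λ₁ Σ_{j=1}^{p} ω_j |β_j|. Then ‖β₂ − β₁‖ ≤ λ₁ ‖ω‖ / (ζ + λ₂), where ‖ω‖ = √(Σ_j ω_j²). -/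
open Matrix BigOperators Finset

lemma expand_sum {m : ℕ} (u v : Fin m → ℝ) (t : ℝ) :
    ∑ i, (u i + t * v i) ^ 2
      = ∑ i, (u i) ^ 2 + t * (2 * ∑ i, u i * v i) + t ^ 2 * ∑ i, (v i) ^ 2 := by
  simp only [Finset.mul_sum, ← Finset.sum_add_distrib]
  exact Finset.sum_congr rfl fun i _ => by ring

/-- Minimizer perturbation bound (equation (7) in the proof of Theorem 2 of the paper):
if `β₁` minimizes the ridge objective `f(β) = ‖y − Xβ‖² + λ₂‖β‖²` whose smallest
eigenvalue bound is `ζ`, and `β₂` minimizes `f(β) + λ₁ Σ_j ω_j|β_j|`, then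
`‖β₂ − β₁‖ ≤ λ₁‖ω‖/(ζ + λ₂)`. -/
theorem stmt_14 {n p : ℕ} (X : Matrix (Fin n) (Fin p) ℝ) (y : Fin n → ℝ)
    (lam2 lam1 : ℝ) (hlam2 : 0 ≤ lam2) (hlam1 : 0 ≤ lam1)
    (ω : Fin p → ℝ) (hω : ∀ j, 0 ≤ ω j)
    (ζ : ℝ) (hζ : 0 ≤ ζ)
    (hmin : ∀ v : Fin p → ℝ, ζ * ∑ j, (v j) ^ 2 ≤ v ⬝ᵥ (Xᵀ * X).mulVec v)
    (hpos : 0 < ζ + lam2)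
    (β₁ β₂ : Fin p → ℝ)
    (h₁ : ∀ β : Fin p → ℝ,
      (∑ i, (y i - X.mulVec β₁ i) ^ 2) + lam2 * ∑ j, (β₁ j) ^ 2 ≤
        (∑ i, (y i - X.mulVec β i) ^ 2) + lam2 * ∑ j, (β j) ^ 2)
    (h₂ : ∀ β : Fin p → ℝ,
      ((∑ i, (y i - X.mulVec β₂ i) ^ 2) + lam2 * ∑ j, (β₂ j) ^ 2) +
          lam1 * ∑ j, ω j * |β₂ j| ≤
        ((∑ i, (y i - X.mulVec β i) ^ 2) + lam2 * ∑ j, (β j) ^ 2) +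
          lam1 * ∑ j, ω j * |β j|) :
    Real.sqrt (∑ j, (β₂ j - β₁ j) ^ 2) ≤
      lam1 * Real.sqrt (∑ j, (ω j) ^ 2) / (ζ + lam2) := by
  set δ : Fin p → ℝ := fun j => β₂ j - β₁ j with hδ
  set a : Fin n → ℝ := X.mulVec δ with ha
  set r : Fin n → ℝ := fun i => y i - X.mulVec β₁ i with hr
  set S : ℝ := ∑ j, (δ j) ^ 2 with hS
  have hS0 : 0 ≤ S := Finset.sum_nonneg fun j _ => sq_nonneg _
  -- the quadratic coefficient
  set Q : ℝ := ∑ i, (a i) ^ 2 + lam2 * S with hQ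
  set L : ℝ := (-2) * ∑ i, r i * a i + lam2 * (2 * ∑ j, β₁ j * δ j) with hL
  -- expansion of the objective along β₁ + t δ
  have key : ∀ t : ℝ,
      (∑ i, (y i - X.mulVec (fun j => β₁ j + t * δ j) i) ^ 2)
        + lam2 * ∑ j, ((β₁ j + t * δ j)) ^ 2
      = ((∑ i, (y i - X.mulVec β₁ i) ^ 2) + lam2 * ∑ j, (β₁ j) ^ 2)
        + t * L + t ^ 2 * Q := by
    intro t
    have hmv : X.mulVec (fun j => β₁ j + t * δ j) = fun i => X.mulVec β₁ i + t * a i := by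
      funext i
      simp only [ha, Matrix.mulVec, dotProduct, Finset.mul_sum, ← Finset.sum_add_distrib]
      exact Finset.sum_congr rfl fun j _ => by ring
    have e1 : ∑ i, (y i - X.mulVec (fun j => β₁ j + t * δ j) i) ^ 2
        = ∑ i, (r i + t * (-a i)) ^ 2 := by
      rw [hmv]; exact Finset.sum_congr rfl fun i _ => by simp [hr]; ring
    rw [e1, expand_sum, expand_sum β₁ δ t]
    simp only [hL, hQ, hS]
    have : ∑ i, r i * (-a i) = -∑ i, r i * a i := by
      rw [← Finset.sum_neg_distrib]; exact Finset.sum_congr rfl fun i _ => by ring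
    have h2 : ∑ i, (-a i) ^ 2 = ∑ i, (a i) ^ 2 :=
      Finset.sum_congr rfl fun i _ => by ring
    rw [this, h2]; ring
  -- linear coefficient is nonnegative
  have hQ0 : 0 ≤ Q := by
    have := Finset.sum_nonneg (fun i (_ : i ∈ Finset.univ) => sq_nonneg (a i))
    have := mul_nonneg hlam2 hS0
    simp only [hQ]; linarith
  have hL0 : 0 ≤ L := by
    by_contra hneg
    push_neg at hneg
    rcases eq_or_lt_of_le hQ0 with hQz | hQp
    · have := h₁ (fun j => β₁ j + 1 * δ j)
      rw [key 1] at this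
      nlinarith
    · set t : ℝ := -L / (2 * Q) with ht
      have htpos : 0 < t := div_pos (by linarith) (by linarith)
      have := h₁ (fun j => β₁ j + t * δ j)
      rw [key t] at this
      have h1 : 0 ≤ t * L + t ^ 2 * Q := by linarith
      have h2 : t * L + t ^ 2 * Q = t * (L / 2) := by
        have htQ : t * (2 * Q) = -L := by
          rw [ht]; exact div_mul_cancel₀ _ (ne_of_gt (by linarith))
        linear_combination (t / 2) * htQ
      nlinarith
  -- f(β₂) - f(β₁) ≥ Q ≥ (ζ + lam2) * S
  have hβ₂ : (fun j => β₁ j + 1 * δ j) = β₂ := by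
    funext j; simp [hδ]
  have hgap : ((∑ i, (y i - X.mulVec β₂ i) ^ 2) + lam2 * ∑ j, (β₂ j) ^ 2)
      = ((∑ i, (y i - X.mulVec β₁ i) ^ 2) + lam2 * ∑ j, (β₁ j) ^ 2) + L + Q := by
    have hkey := key 1
    rw [hβ₂] at hkey
    have hsum : ∑ j, (β₁ j + 1 * δ j) ^ 2 = ∑ j, (β₂ j) ^ 2 :=
      Finset.sum_congr rfl fun j _ => by simp [hδ]
    rw [hsum] at hkey
    linarith [hkey]
  have hQlb : (ζ + lam2) * S ≤ Q := by
    have h := hmin δ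
    have heq : δ ⬝ᵥ (Xᵀ * X).mulVec δ = ∑ i, (a i) ^ 2 := by
      rw [ha, ← Matrix.mulVec_mulVec, Matrix.dotProduct_mulVec, Matrix.vecMul_transpose]
      simp [dotProduct, sq]
    rw [heq] at h
    simp only [hQ]; linarith
  -- from h₂ at β₁
  have habs : ∑ j, ω j * |β₁ j| - ∑ j, ω j * |β₂ j| ≤ ∑ j, ω j * |δ j| := by
    rw [← Finset.sum_sub_distrib]
    refine Finset.sum_le_sum fun j _ => ?_
    have : |β₁ j| - |β₂ j| ≤ |δ j| := by
      have := abs_sub_abs_le_abs_sub (β₁ j) (β₂ j)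
      have h2 : |β₁ j - β₂ j| = |δ j| := by rw [hδ]; rw [abs_sub_comm]
      linarith
    nlinarith [hω j, abs_nonneg (β₂ j)]
  have hCS : ∑ j, ω j * |δ j| ≤ Real.sqrt (∑ j, (ω j) ^ 2) * Real.sqrt S := by
    have h := sum_mul_sq_le_sq_mul_sq Finset.univ ω (fun j => |δ j|)
    have hnn : 0 ≤ ∑ j, ω j * |δ j| :=
      Finset.sum_nonneg fun j _ => mul_nonneg (hω j) (abs_nonneg _)
    have hsq : ∑ j, |δ j| ^ 2 = S := by
      simp only [hS]; exact Finset.sum_congr rfl fun j _ => sq_abs _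
    calc ∑ j, ω j * |δ j| = Real.sqrt ((∑ j, ω j * |δ j|) ^ 2) := (Real.sqrt_sq hnn).symm
      _ ≤ Real.sqrt ((∑ j, (ω j) ^ 2) * ∑ j, |δ j| ^ 2) := Real.sqrt_le_sqrt h
      _ = Real.sqrt (∑ j, (ω j) ^ 2) * Real.sqrt S := by
          rw [Real.sqrt_mul (Finset.sum_nonneg fun j _ => sq_nonneg _), hsq]
  have hmain : (ζ + lam2) * S ≤ lam1 * (Real.sqrt (∑ j, (ω j) ^ 2) * Real.sqrt S) := by
    have h := h₂ β₁
    rw [hgap] at h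
    have h3 : Q ≤ lam1 * (∑ j, ω j * |β₁ j| - ∑ j, ω j * |β₂ j|) := by nlinarith
    have h4 : lam1 * (∑ j, ω j * |β₁ j| - ∑ j, ω j * |β₂ j|)
        ≤ lam1 * (Real.sqrt (∑ j, (ω j) ^ 2) * Real.sqrt S) := by
      apply mul_le_mul_of_nonneg_left _ hlam1
      linarith
    linarith
  -- conclude
  have hsqS : Real.sqrt S * Real.sqrt S = S := Real.mul_self_sqrt hS0
  rw [le_div_iff₀ hpos]
  rcases eq_or_lt_of_le (Real.sqrt_nonneg S) with hz | hz
  · rw [← hz, zero_mul]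
    positivity
  · have h6 : (Real.sqrt S * (ζ + lam2)) * Real.sqrt S
        ≤ (lam1 * Real.sqrt (∑ j, (ω j) ^ 2)) * Real.sqrt S := by
      have he : (Real.sqrt S * (ζ + lam2)) * Real.sqrt S = (ζ + lam2) * S := by
        linear_combination (ζ + lam2) * hsqS
      rw [he]
      calc (ζ + lam2) * S ≤ lam1 * (Real.sqrt (∑ j, (ω j) ^ 2) * Real.sqrt S) := hmain
        _ = (lam1 * Real.sqrt (∑ j, (ω j) ^ 2)) * Real.sqrt S := by ring
    exact le_of_mul_le_mul_right h6 hz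
end

section
/- Let X be an n × p real matrix with c > 0 satisfying c‖v‖² ≤ vᵀ(XᵀX)v for all v ∈ ℝᵖ (so XᵀX is invertible with smallest eigenvalue at least c), let β₀ ∈ ℝᵖ and λ ≥ 0. On a probability space, let ε : Ω → ℝⁿ be a random vector with square-integrable components satisfying E[ε_i] = 0, E[ε_i²] = σ², E[ε_i ε_j] = 0 for i ≠ j, let u : Ω → ℝᵖ be a square-integrable random vector, and let β̂ : Ω → ℝᵖ satisfy almost surely β̂ − β₀ = (XᵀX)⁻¹ (Xᵀε − λu). Then E[‖β̂ − β₀‖²] ≤ (2σ² tr(XᵀX) + 2λ² E[‖u‖²]) / c². -/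
open MeasureTheory Matrix BigOperators

lemma aux_integrable_mul {Ω : Type*} [MeasurableSpace Ω] {P : Measure Ω} {f g : Ω → ℝ}
    (hf : MemLp f 2 P) (hg : MemLp g 2 P) : Integrable (fun ω => f ω * g ω) P := by
  refine Integrable.mono' ((hf.integrable_sq.add hg.integrable_sq).const_mul (1/2 : ℝ))
    (hf.aestronglyMeasurable.mul hg.aestronglyMeasurable) ?_
  filter_upwards with ω
  simp only [Pi.add_apply]
  rw [Real.norm_eq_abs, abs_mul]
  nlinarith [sq_nonneg (|f ω| - |g ω|), sq_abs (f ω), sq_abs (g ω), abs_nonneg (f ω),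
    abs_nonneg (g ω)]

lemma aux_inv_bound {p : ℕ} (A : Matrix (Fin p) (Fin p) ℝ) (c : ℝ) (hc : 0 < c)
    (hmin : ∀ v : Fin p → ℝ, c * ∑ j, (v j) ^ 2 ≤ v ⬝ᵥ A.mulVec v)
    (hA : IsUnit A.det) (w : Fin p → ℝ) :
    ∑ j, (A⁻¹.mulVec w j) ^ 2 ≤ (∑ j, (w j) ^ 2) / c ^ 2 := by
  set v := A⁻¹.mulVec w with hv
  have hAv : A.mulVec v = w := by
    rw [hv, Matrix.mulVec_mulVec, Matrix.mul_nonsing_inv A hA, Matrix.one_mulVec]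
  have h1 : c * ∑ j, (v j) ^ 2 ≤ ∑ j, v j * w j := by
    simpa [hAv, dotProduct] using hmin v
  have hcs : (∑ j, v j * w j) ^ 2 ≤ (∑ j, (v j) ^ 2) * ∑ j, (w j) ^ 2 :=
    Finset.sum_mul_sq_le_sq_mul_sq _ _ _
  have hV : 0 ≤ ∑ j, (v j) ^ 2 := Finset.sum_nonneg fun j _ => sq_nonneg _
  have hW : 0 ≤ ∑ j, (w j) ^ 2 := Finset.sum_nonneg fun j _ => sq_nonneg _
  rcases eq_or_lt_of_le hV with h0 | h0
  · rw [← h0]; positivity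
  · have h2 : (c * ∑ j, (v j) ^ 2) ^ 2 ≤ (∑ j, v j * w j) ^ 2 :=
      pow_le_pow_left₀ (by positivity) h1 2
    rw [le_div_iff₀ (by positivity)]
    nlinarith

/-- Core inequality of Lemma 3 of the paper: if `c‖v‖² ≤ vᵀXᵀXv`, the errors are
uncorrelated with mean zero and variance `σ²`, `u` is square-integrable, and almost
surely `β̂ − β₀ = (XᵀX)⁻¹(Xᵀε − λu)`, then
`E‖β̂ − β₀‖² ≤ (2σ² tr(XᵀX) + 2λ² E‖u‖²)/c²`. -/
theorem stmt_15 {Ω : Type*} [MeasurableSpace Ω] (P : Measure Ω) [IsProbabilityMeasure P]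
    {n p : ℕ} (X : Matrix (Fin n) (Fin p) ℝ) (c : ℝ) (hc : 0 < c)
    (hmin : ∀ v : Fin p → ℝ, c * ∑ j, (v j) ^ 2 ≤ v ⬝ᵥ (Xᵀ * X).mulVec v)
    (β₀ : Fin p → ℝ) (lam : ℝ) (hlam : 0 ≤ lam)
    (σ : ℝ) (ε : Ω → Fin n → ℝ)
    (hL2 : ∀ i, MemLp (fun ω => ε ω i) 2 P)
    (hmean : ∀ i, ∫ ω, ε ω i ∂P = 0)
    (hvar : ∀ i, ∫ ω, (ε ω i) ^ 2 ∂P = σ ^ 2)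
    (hcov : ∀ i j, i ≠ j → ∫ ω, ε ω i * ε ω j ∂P = 0)
    (u : Ω → Fin p → ℝ)
    (huL2 : ∀ j, MemLp (fun ω => u ω j) 2 P)
    (βhat : Ω → Fin p → ℝ)
    (hβhat : ∀ᵐ ω ∂P, βhat ω - β₀ = (Xᵀ * X)⁻¹.mulVec (Xᵀ.mulVec (ε ω) - lam • u ω)) :
    ∫ ω, ∑ j, (βhat ω j - β₀ j) ^ 2 ∂P ≤
      (2 * σ ^ 2 * (Xᵀ * X).trace + 2 * lam ^ 2 * ∫ ω, ∑ j, (u ω j) ^ 2 ∂P) / c ^ 2 := by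
  -- invertibility
  have hdet : IsUnit (Xᵀ * X).det := by
    have hpd : (Xᵀ * X).PosDef := by
      refine Matrix.posDef_iff_dotProduct_mulVec.2 ⟨by simpa using Matrix.isHermitian_conjTranspose_mul_self X, fun x hx => ?_⟩
      have hxs : 0 < ∑ j, (x j) ^ 2 := by
        rcases Function.ne_iff.1 hx with ⟨j, hj⟩
        exact Finset.sum_pos' (fun i _ => sq_nonneg _)
          ⟨j, Finset.mem_univ j, (pow_pos (abs_pos.2 hj) 2).trans_le (by rw [sq_abs])⟩
      calc (0:ℝ) < c * ∑ j, (x j) ^ 2 := by positivity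
        _ ≤ x ⬝ᵥ (Xᵀ * X).mulVec x := hmin x
        _ = star x ⬝ᵥ (Xᵀ * X).mulVec x := by simp
    exact (Matrix.isUnit_iff_isUnit_det _).1 hpd.isUnit
  -- coordinates of Xᵀ ε
  have hcoord : ∀ (j : Fin p) (ω : Ω), Xᵀ.mulVec (ε ω) j = ∑ i, X i j * ε ω i := by
    intro j ω; simp [Matrix.mulVec, dotProduct, Matrix.transpose_apply]
  have hfL2 : ∀ j, MemLp (fun ω => Xᵀ.mulVec (ε ω) j) 2 P := by
    intro j
    have : (fun ω => Xᵀ.mulVec (ε ω) j) = fun ω => ∑ i, X i j * ε ω i := by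
      funext ω; exact hcoord j ω
    rw [this]
    exact memLp_finset_sum Finset.univ (fun i _ => (hL2 i).const_mul (X i j))
  -- coordinates of w := Xᵀε - lam • u
  have hwL2 : ∀ k, MemLp (fun ω => (Xᵀ.mulVec (ε ω) - lam • u ω) k) 2 P := by
    intro k
    have : (fun ω => (Xᵀ.mulVec (ε ω) - lam • u ω) k)
        = fun ω => Xᵀ.mulVec (ε ω) k - lam * u ω k := by
      funext ω; simp
    rw [this]
    exact (hfL2 k).sub ((huL2 k).const_mul lam)
  -- coordinates of A⁻¹ w
  have hvL2 : ∀ j, MemLp (fun ω => (Xᵀ * X)⁻¹.mulVec (Xᵀ.mulVec (ε ω) - lam • u ω) j) 2 P := by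
    intro j
    have : (fun ω => (Xᵀ * X)⁻¹.mulVec (Xᵀ.mulVec (ε ω) - lam • u ω) j)
        = fun ω => ∑ k, (Xᵀ * X)⁻¹ j k * (Xᵀ.mulVec (ε ω) - lam • u ω) k := by
      funext ω; simp [Matrix.mulVec, dotProduct]
    rw [this]
    exact memLp_finset_sum Finset.univ (fun k _ => (hwL2 k).const_mul _)
  -- integrable functions
  have h_int : Integrable
      (fun ω => ∑ j, ((Xᵀ * X)⁻¹.mulVec (Xᵀ.mulVec (ε ω) - lam • u ω) j) ^ 2) P :=
    integrable_finset_sum _ (fun j _ => (hvL2 j).integrable_sq)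
  have hS1_int : Integrable (fun ω => ∑ j, (Xᵀ.mulVec (ε ω) j) ^ 2) P :=
    integrable_finset_sum _ (fun j _ => (hfL2 j).integrable_sq)
  have hS2_int : Integrable (fun ω => ∑ j, (u ω j) ^ 2) P :=
    integrable_finset_sum _ (fun j _ => (huL2 j).integrable_sq)
  have hg_int : Integrable
      (fun ω => (2 * ∑ j, (Xᵀ.mulVec (ε ω) j) ^ 2 + 2 * lam ^ 2 * ∑ j, (u ω j) ^ 2) / c ^ 2) P :=
    ((hS1_int.const_mul 2).add (hS2_int.const_mul (2 * lam ^ 2))).div_const _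
  -- rewrite LHS
  have hLHS : ∫ ω, ∑ j, (βhat ω j - β₀ j) ^ 2 ∂P
      = ∫ ω, ∑ j, ((Xᵀ * X)⁻¹.mulVec (Xᵀ.mulVec (ε ω) - lam • u ω) j) ^ 2 ∂P := by
    refine integral_congr_ae ?_
    filter_upwards [hβhat] with ω hω
    have h' := congrFun hω
    simp only [Pi.sub_apply] at h'
    exact Finset.sum_congr rfl fun j _ => by rw [h' j]
  rw [hLHS]
  -- pointwise bound and integral_mono
  have hmono : ∫ ω, ∑ j, ((Xᵀ * X)⁻¹.mulVec (Xᵀ.mulVec (ε ω) - lam • u ω) j) ^ 2 ∂P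
      ≤ ∫ ω, (2 * ∑ j, (Xᵀ.mulVec (ε ω) j) ^ 2 + 2 * lam ^ 2 * ∑ j, (u ω j) ^ 2) / c ^ 2 ∂P := by
    refine integral_mono h_int hg_int (fun ω => ?_)
    have hb1 := aux_inv_bound (Xᵀ * X) c hc hmin hdet (Xᵀ.mulVec (ε ω) - lam • u ω)
    refine hb1.trans ?_
    have hb2 : ∑ k, ((Xᵀ.mulVec (ε ω) - lam • u ω) k) ^ 2
        ≤ 2 * ∑ j, (Xᵀ.mulVec (ε ω) j) ^ 2 + 2 * lam ^ 2 * ∑ j, (u ω j) ^ 2 := by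
      rw [Finset.mul_sum, Finset.mul_sum, ← Finset.sum_add_distrib]
      refine Finset.sum_le_sum fun k _ => ?_
      simp only [Pi.sub_apply, Pi.smul_apply, smul_eq_mul]
      nlinarith [sq_nonneg (Xᵀ.mulVec (ε ω) k + lam * u ω k)]
    exact div_le_div_of_nonneg_right hb2 (by positivity) |>.trans_eq rfl
  refine hmono.trans ?_
  -- compute the RHS integral
  rw [integral_div]
  have hee : ∀ i k, ∫ ω, ε ω i * ε ω k ∂P = if i = k then σ ^ 2 else 0 := by
    intro i k
    split_ifs with h
    · subst h; simp_rw [← sq]; exact hvar i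
    · exact hcov i k h
  have hkey : ∀ j : Fin p, ∫ ω, (Xᵀ.mulVec (ε ω) j) ^ 2 ∂P = σ ^ 2 * ∑ i, (X i j) ^ 2 := by
    intro j
    have expand : ∀ ω, (Xᵀ.mulVec (ε ω) j) ^ 2
        = ∑ i, ∑ k, (X i j * X k j) * (ε ω i * ε ω k) := by
      intro ω
      rw [hcoord j ω, sq, Finset.sum_mul_sum]
      exact Finset.sum_congr rfl fun i _ => Finset.sum_congr rfl fun k _ => by ring
    simp_rw [expand]
    rw [integral_finset_sum _ (fun i _ => integrable_finset_sum _
      (fun k _ => (aux_integrable_mul (hL2 i) (hL2 k)).const_mul _))]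
    have : ∀ i : Fin n, ∫ ω, ∑ k, (X i j * X k j) * (ε ω i * ε ω k) ∂P
        = ∑ k, (X i j * X k j) * ∫ ω, ε ω i * ε ω k ∂P := by
      intro i
      rw [integral_finset_sum _ (fun k _ => (aux_integrable_mul (hL2 i) (hL2 k)).const_mul _)]
      exact Finset.sum_congr rfl fun k _ => integral_const_mul _ _
    simp_rw [this, hee, mul_ite, mul_zero, Finset.sum_ite_eq, Finset.mem_univ, if_true,
      Finset.mul_sum]
    exact Finset.sum_congr rfl fun i _ => by ring
  have hnum : ∫ ω, (2 * ∑ j, (Xᵀ.mulVec (ε ω) j) ^ 2 + 2 * lam ^ 2 * ∑ j, (u ω j) ^ 2) ∂P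
      = 2 * σ ^ 2 * (Xᵀ * X).trace + 2 * lam ^ 2 * ∫ ω, ∑ j, (u ω j) ^ 2 ∂P := by
    rw [integral_add (hS1_int.const_mul 2) (hS2_int.const_mul (2 * lam ^ 2)),
      integral_const_mul, integral_const_mul,
      integral_finset_sum _ (fun j _ => (hfL2 j).integrable_sq)]
    have htr : ∑ j, ∫ ω, (Xᵀ.mulVec (ε ω) j) ^ 2 ∂P = σ ^ 2 * (Xᵀ * X).trace := by
      simp_rw [hkey, ← Finset.mul_sum]
      congr 1
      simp [Matrix.trace, Matrix.diag, Matrix.mul_apply, sq]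
    rw [htr]; ring
  rw [hnum]
end

section
/- Let X and Y be independent real random variables with cumulative distribution functions F and G respectively, both continuous, and suppose F(t) ≤ G(t) for all t ∈ ℝ. Then P(X > Y) ≥ 1/2. If moreover there is an open interval I with F(t) < G(t) for all t ∈ I and P(X ∈ I) > 0, then P(X > Y) > 1/2. -/
open MeasureTheory ProbabilityTheory
open scoped ENNReal

lemma noAtoms_of_continuous_cdf (m : Measure ℝ) [IsProbabilityMeasure m]
    {F : ℝ → ℝ} (hF : ∀ t, F t = (m (Set.Iic t)).toReal) (hc : Continuous F) :
    ∀ x : ℝ, m {x} = 0 := by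
  intro x
  have hU : (⋃ n : ℕ, Set.Iic (x - 1 / (n + 1))) = Set.Iio x := by
    ext y
    simp only [Set.mem_iUnion, Set.mem_Iic, Set.mem_Iio]
    constructor
    · rintro ⟨n, hn⟩
      have h0 : (0 : ℝ) < 1 / ((n : ℝ) + 1) := by positivity
      linarith
    · intro hy
      obtain ⟨n, hn⟩ := exists_nat_one_div_lt (sub_pos.2 hy)
      exact ⟨n, by linarith⟩
  have hmono : Monotone fun n : ℕ => Set.Iic (x - 1 / ((n : ℝ) + 1)) := by
    intro i j hij
    apply Set.Iic_subset_Iic.2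
    have hij' : ((i : ℝ) + 1) ≤ (j : ℝ) + 1 := by
      have : (i : ℝ) ≤ j := Nat.cast_le.2 hij
      linarith
    have : (1 : ℝ) / ((j : ℝ) + 1) ≤ 1 / ((i : ℝ) + 1) :=
      one_div_le_one_div_of_le (by positivity) hij'
    linarith
  have h1 : Filter.Tendsto (fun n : ℕ => m (Set.Iic (x - 1 / ((n : ℝ) + 1))))
      Filter.atTop (nhds (m (Set.Iio x))) := by
    have := tendsto_measure_iUnion_atTop (μ := m) hmono
    rwa [hU] at this
  have hx : Filter.Tendsto (fun n : ℕ => x - 1 / ((n : ℝ) + 1)) Filter.atTop (nhds x) := by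
    have := tendsto_one_div_add_atTop_nhds_zero_nat (𝕜 := ℝ)
    have h2 := Filter.Tendsto.const_sub x this
    simpa using h2
  have h2 : Filter.Tendsto (fun n : ℕ => (m (Set.Iic (x - 1 / ((n : ℝ) + 1)))).toReal)
      Filter.atTop (nhds (F x)) := by
    have h3 := (hc.tendsto x).comp hx
    have : (fun n : ℕ => (m (Set.Iic (x - 1 / ((n : ℝ) + 1)))).toReal)
        = fun n : ℕ => F (x - 1 / ((n : ℝ) + 1)) := by
      funext n; rw [hF]
    rw [this]
    exact h3
  have h3 : Filter.Tendsto (fun n : ℕ => (m (Set.Iic (x - 1 / ((n : ℝ) + 1)))).toReal)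
      Filter.atTop (nhds (m (Set.Iio x)).toReal) :=
    (ENNReal.tendsto_toReal (measure_ne_top m _)).comp h1
  have heq : (m (Set.Iio x)).toReal = F x := tendsto_nhds_unique h3 h2
  have hIi : m (Set.Iio x) = m (Set.Iic x) :=
    (ENNReal.toReal_eq_toReal_iff' (measure_ne_top m _) (measure_ne_top m _)).1
      (heq.trans (hF x))
  have hdisj : Disjoint (Set.Iio x) {x} :=
    Set.disjoint_singleton_right.2 (by simp)
  have hsplit : m (Set.Iic x) = m (Set.Iio x) + m {x} := by
    rw [← measure_union hdisj (measurableSet_singleton x), Set.Iio_union_right]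
  have : m (Set.Iio x) + m {x} = m (Set.Iio x) + 0 := by
    rw [add_zero, ← hsplit, hIi]
  exact (ENNReal.add_right_inj (measure_ne_top m _)).1 this

/-- Stochastic dominance comparison principle: if `X` and `Y` are independent with
continuous CDFs `F ≤ G`, then `P(X > Y) ≥ 1/2`; and if moreover `F < G` on an open
interval charged by `X`, then `P(X > Y) > 1/2`. -/
theorem stmt_18 {Ω : Type*} [MeasurableSpace Ω] (P : Measure Ω) [IsProbabilityMeasure P]
    (X Y : Ω → ℝ) (hX : Measurable X) (hY : Measurable Y)
    (hindep : IndepFun X Y P)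
    (F G : ℝ → ℝ)
    (hF : ∀ t, F t = (P {ω | X ω ≤ t}).toReal)
    (hG : ∀ t, G t = (P {ω | Y ω ≤ t}).toReal)
    (hFcont : Continuous F) (hGcont : Continuous G)
    (hle : ∀ t, F t ≤ G t) :
    (1 : ℝ≥0∞) / 2 ≤ P {ω | Y ω < X ω} ∧
    (∀ a b : ℝ, a < b → (∀ t ∈ Set.Ioo a b, F t < G t) →
      0 < P {ω | X ω ∈ Set.Ioo a b} → (1 : ℝ≥0∞) / 2 < P {ω | Y ω < X ω}) := by
  haveI hμp : IsProbabilityMeasure (P.map X) := Measure.isProbabilityMeasure_map hX.aemeasurable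
  haveI hνp : IsProbabilityMeasure (P.map Y) := Measure.isProbabilityMeasure_map hY.aemeasurable
  have hFμ : ∀ t, F t = ((P.map X) (Set.Iic t)).toReal := by
    intro t; rw [hF t, Measure.map_apply hX measurableSet_Iic]; rfl
  have hGν : ∀ t, G t = ((P.map Y) (Set.Iic t)).toReal := by
    intro t; rw [hG t, Measure.map_apply hY measurableSet_Iic]; rfl
  haveI : NullSingletonClass (P.map X) := ⟨noAtoms_of_continuous_cdf _ hFμ hFcont⟩
  haveI : NullSingletonClass (P.map Y) := ⟨noAtoms_of_continuous_cdf _ hGν hGcont⟩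
  have hmap : P.map (fun ω => (X ω, Y ω)) = (P.map X).prod (P.map Y) :=
    (indepFun_iff_map_prod_eq_prod_map_map hX.aemeasurable hY.aemeasurable).1 hindep
  have hms : MeasurableSet {p : ℝ × ℝ | p.2 < p.1} :=
    measurableSet_lt measurable_snd measurable_fst
  -- key identity
  have hPval : P {ω | Y ω < X ω} = ∫⁻ x, (P.map Y) (Set.Iic x) ∂(P.map X) := by
    have hset : {ω | Y ω < X ω} = (fun ω => (X ω, Y ω)) ⁻¹' {p : ℝ × ℝ | p.2 < p.1} := rfl
    rw [hset, ← Measure.map_apply (hX.prodMk hY) hms, hmap, Measure.prod_apply hms]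
    refine lintegral_congr fun x => ?_
    have h4 : (Prod.mk x ⁻¹' {p : ℝ × ℝ | p.2 < p.1}) = Set.Iio x := rfl
    rw [h4]
    exact measure_congr Iio_ae_eq_Iic
  -- the half identity
  have hmeasF : Measurable fun x : ℝ => (P.map X) (Set.Iic x) :=
    Monotone.measurable fun i j hij => measure_mono (Set.Iic_subset_Iic.2 hij)
  have hmeasG : Measurable fun x : ℝ => (P.map Y) (Set.Iic x) :=
    Monotone.measurable fun i j hij => measure_mono (Set.Iic_subset_Iic.2 hij)
  have hhalf : ∫⁻ x, (P.map X) (Set.Iic x) ∂(P.map X) = 1 / 2 := by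
    set μ := P.map X
    set I := ∫⁻ x, μ (Set.Iic x) ∂μ with hI
    have hA : MeasurableSet {p : ℝ × ℝ | p.2 ≤ p.1} :=
      measurableSet_le measurable_snd measurable_fst
    have hmA : (μ.prod μ) {p : ℝ × ℝ | p.2 ≤ p.1} = I := by
      rw [Measure.prod_apply hA]
      exact lintegral_congr fun x => rfl
    have hmB : (μ.prod μ) {p : ℝ × ℝ | p.1 ≤ p.2} = I := by
      have h5 : {p : ℝ × ℝ | p.1 ≤ p.2} = Prod.swap ⁻¹' {p : ℝ × ℝ | p.2 ≤ p.1} := rfl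
      rw [h5, ← Measure.map_apply measurable_swap hA, Measure.prod_swap, hmA]
    have hdiag : (μ.prod μ) ({p : ℝ × ℝ | p.2 ≤ p.1} ∩ {p : ℝ × ℝ | p.1 ≤ p.2}) = 0 := by
      have hseteq : {p : ℝ × ℝ | p.2 ≤ p.1} ∩ {p : ℝ × ℝ | p.1 ≤ p.2}
          = {p : ℝ × ℝ | p.1 = p.2} := by
        ext p
        simp only [Set.mem_inter_iff, Set.mem_setOf_eq]
        constructor
        · rintro ⟨h1, h2⟩; exact le_antisymm h2 h1
        · intro h; exact ⟨h.ge, h.le⟩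
      rw [hseteq]
      have hm : MeasurableSet {p : ℝ × ℝ | p.1 = p.2} :=
        measurableSet_eq_fun measurable_fst measurable_snd
      rw [Measure.prod_apply hm]
      have hz : ∀ x : ℝ, μ (Prod.mk x ⁻¹' {p : ℝ × ℝ | p.1 = p.2}) = 0 := by
        intro x
        have h6 : (Prod.mk x ⁻¹' {p : ℝ × ℝ | p.1 = p.2}) = {x} := by
          ext y; simp [eq_comm]
        rw [h6]
        exact measure_singleton x
      rw [lintegral_congr hz]
      simp
    have hunion : (μ.prod μ) ({p : ℝ × ℝ | p.2 ≤ p.1} ∪ {p : ℝ × ℝ | p.1 ≤ p.2}) = 1 := by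
      have h7 : {p : ℝ × ℝ | p.2 ≤ p.1} ∪ {p : ℝ × ℝ | p.1 ≤ p.2} = Set.univ := by
        ext p
        simp [le_total p.2 p.1]
      rw [h7]
      exact measure_univ
    have hsum : I + I = 1 := by
      have h8 := measure_union_add_inter (μ := μ.prod μ)
        {p : ℝ × ℝ | p.2 ≤ p.1} (measurableSet_le measurable_fst measurable_snd)
      rw [hmA, hmB, hdiag, hunion, add_zero] at h8
      exact h8.symm
    have h2I : 2 * I = 1 := by rw [two_mul]; exact hsum
    exact (ENNReal.eq_div_iff two_ne_zero (by norm_num)).2 h2I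
  -- pointwise inequality
  have hpt : ∀ x, (P.map X) (Set.Iic x) ≤ (P.map Y) (Set.Iic x) := fun x =>
    (ENNReal.toReal_le_toReal (measure_ne_top _ _) (measure_ne_top _ _)).1
      (by rw [← hFμ x, ← hGν x]; exact hle x)
  constructor
  · rw [hPval, ← hhalf]
    exact lintegral_mono fun x => hpt x
  · intro a b hab hlt hpos
    have hμIoo : (P.map X) (Set.Ioo a b) ≠ 0 := by
      rw [Measure.map_apply hX measurableSet_Ioo]
      exact (hpos.trans_le (le_of_eq rfl)).ne'
    have hsm : MeasurableSet (Set.Ioo a b) := measurableSet_Ioo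
    have hfin : ∫⁻ x in Set.Ioo a b, (P.map X) (Set.Iic x) ∂(P.map X) ≠ ∞ := by
      refine ne_of_lt (lt_of_le_of_lt ?_ (by norm_num : (1 : ℝ≥0∞) < ∞))
      calc ∫⁻ x in Set.Ioo a b, (P.map X) (Set.Iic x) ∂(P.map X)
          ≤ ∫⁻ _ in Set.Ioo a b, 1 ∂(P.map X) :=
            lintegral_mono fun x => prob_le_one
        _ = (P.map X) (Set.Ioo a b) := by simp
        _ ≤ 1 := prob_le_one
    have hstrict : (∫⁻ x in Set.Ioo a b, (P.map X) (Set.Iic x) ∂(P.map X))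
        < ∫⁻ x in Set.Ioo a b, (P.map Y) (Set.Iic x) ∂(P.map X) := by
      refine setLIntegral_strict_mono hsm hμIoo hmeasG hfin ?_
      filter_upwards with x hx
      exact (ENNReal.toReal_lt_toReal (measure_ne_top _ _) (measure_ne_top _ _)).1
        (by rw [← hFμ x, ← hGν x]; exact hlt x hx)
    have hcfin : ∫⁻ x in (Set.Ioo a b)ᶜ, (P.map X) (Set.Iic x) ∂(P.map X) ≠ ∞ := by
      refine ne_of_lt (lt_of_le_of_lt ?_ (by norm_num : (1 : ℝ≥0∞) < ∞))
      calc ∫⁻ x in (Set.Ioo a b)ᶜ, (P.map X) (Set.Iic x) ∂(P.map X)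
          ≤ ∫⁻ _ in (Set.Ioo a b)ᶜ, 1 ∂(P.map X) :=
            lintegral_mono fun x => prob_le_one
        _ = (P.map X) (Set.Ioo a b)ᶜ := by simp
        _ ≤ 1 := prob_le_one
    have hcle : (∫⁻ x in (Set.Ioo a b)ᶜ, (P.map X) (Set.Iic x) ∂(P.map X))
        ≤ ∫⁻ x in (Set.Ioo a b)ᶜ, (P.map Y) (Set.Iic x) ∂(P.map X) :=
      lintegral_mono fun x => hpt x
    rw [hPval, ← lintegral_add_compl (fun x => (P.map Y) (Set.Iic x)) hsm,
      ← hhalf, ← lintegral_add_compl (fun x => (P.map X) (Set.Iic x)) hsm]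
    exact ENNReal.add_lt_add_of_lt_of_le hcfin hstrict hcle
end
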